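/- Let a > 0 and β > 0, define errfn(z) := (1/(2π)) ∫_{-∞}^z e^{-ξ²} dξ and e_{a,β}(y,t) := errfn((y + a t)/√(4βt)) - errfn((y - a t)/√(4βt)). Then there exist C > 0 and M > 0 such that for all y ≤ 0 and all t ≥ 1, |∂_t e_{a,β}(y,t)| ≤ C t^{-1/2} exp(-(y + a t)²/(M t)). -/

import Mathlib

open MeasureTheory Real Set

/-- The error function `errfn(z) = (1/(2π)) ∫_{-∞}^z e^{-ξ²} dξ`. -/
noncomputable def errfn (z : ℝ) : ℝ := (1 / (2 * Real.pi)) * ∫ ξ in Iic z, Real.exp (-ξ^2)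

/-- The scattered error-function kernel
`e_{a,β}(y,t) = errfn((y+at)/√(4βt)) - errfn((y-at)/√(4βt))`. -/
noncomputable def eKernel (a β y t : ℝ) : ℝ :=
  errfn ((y + a * t) / Real.sqrt (4 * β * t)) - errfn ((y - a * t) / Real.sqrt (4 * β * t))

lemma gauss_integrable : Integrable (fun ξ : ℝ => Real.exp (-ξ^2)) := by
  have := integrable_exp_neg_mul_sq (b := 1) one_pos
  simpa using this

lemma errfn_hasDerivAt (z : ℝ) :
    HasDerivAt errfn ((1 / (2 * Real.pi)) * Real.exp (-z^2)) z := by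
  have hcont : Continuous fun ξ : ℝ => Real.exp (-ξ^2) := by continuity
  have hkey : ∀ w : ℝ, errfn w =
      (1 / (2 * Real.pi)) * ((∫ ξ in Iic (0:ℝ), Real.exp (-ξ^2)) +
        ∫ ξ in (0:ℝ)..w, Real.exp (-ξ^2)) := by
    intro w
    rw [← intervalIntegral.integral_Iic_sub_Iic gauss_integrable.integrableOn
      gauss_integrable.integrableOn]
    unfold errfn; ring
  have h1 : HasDerivAt (fun w => ∫ ξ in (0:ℝ)..w, Real.exp (-ξ^2)) (Real.exp (-z^2)) z :=
    intervalIntegral.integral_hasDerivAt_right (hcont.intervalIntegrable _ _)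
      hcont.aestronglyMeasurable.stronglyMeasurableAtFilter hcont.continuousAt
  have h2 : HasDerivAt (fun w => (1 / (2 * Real.pi)) *
      ((∫ ξ in Iic (0:ℝ), Real.exp (-ξ^2)) + ∫ ξ in (0:ℝ)..w, Real.exp (-ξ^2)))
      ((1 / (2 * Real.pi)) * Real.exp (-z^2)) z := by
    have := ((hasDerivAt_const z (∫ ξ in Iic (0:ℝ), Real.exp (-ξ^2))).add h1).const_mul
      (1 / (2 * Real.pi))
    simpa using this
  exact h2.congr_of_eventuallyEq (Filter.Eventually.of_forall fun w => hkey w)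

lemma inner_hasDerivAt (c y β : ℝ) (hβ : 0 < β) {t : ℝ} (ht : 0 < t) :
    HasDerivAt (fun t' => (y + c * t') / Real.sqrt (4 * β * t'))
      ((c * t - y) / (2 * t * Real.sqrt (4 * β * t))) t := by
  have h4βt : (0:ℝ) < 4 * β * t := by positivity
  set S := Real.sqrt (4 * β * t) with hSdef
  have hS : 0 < S := Real.sqrt_pos.mpr h4βt
  have hS2 : S ^ 2 = 4 * β * t := Real.sq_sqrt h4βt.le
  have hlin : HasDerivAt (fun t' : ℝ => 4 * β * t') (4 * β) t := by
    simpa using (hasDerivAt_id t).const_mul (4 * β)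
  have hsqrt : HasDerivAt (fun t' : ℝ => Real.sqrt (4 * β * t'))
      (4 * β / (2 * S)) t := by
    have := (Real.hasDerivAt_sqrt h4βt.ne').comp t hlin
    exact hlin.sqrt h4βt.ne'
  have hnum : HasDerivAt (fun t' : ℝ => y + c * t') c t := by
    exact (((hasDerivAt_id' t).const_mul c).const_add y).congr_deriv (mul_one c)
  have hdiv := hnum.div hsqrt hS.ne'
  refine hdiv.congr_deriv ?_
  rw [← hSdef, hS2]
  field_simp
  linear_combination (2*c) * hS2

lemma abs_mul_exp_neg_sq_le (z : ℝ) : |z| * Real.exp (-z^2) ≤ Real.exp (-z^2/2) := by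
  have h1 : |z| ≤ Real.exp (z^2/2) := by
    have := Real.add_one_le_exp (z^2/2)
    nlinarith [sq_nonneg (|z| - 1), sq_abs z]
  calc |z| * Real.exp (-z^2) ≤ Real.exp (z^2/2) * Real.exp (-z^2) :=
        mul_le_mul_of_nonneg_right h1 (Real.exp_nonneg _)
    _ = Real.exp (-z^2/2) := by rw [← Real.exp_add]; ring_nf

set_option maxHeartbeats 1000000 in
/-- Bound on `∂_t e_{a,β}(y,t)` for `y ≤ 0`, `t ≥ 1`. -/
theorem eKernel_deriv_t_bound (a β : ℝ) (ha : 0 < a) (hβ : 0 < β) :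
    ∃ C M : ℝ, 0 < C ∧ 0 < M ∧ ∀ y : ℝ, y ≤ 0 → ∀ t : ℝ, 1 ≤ t →
      |deriv (fun t' => eKernel a β y t') t|
        ≤ C * t ^ (-(1:ℝ)/2) * Real.exp (-(y + a * t)^2 / (M * t)) := by
  refine ⟨(1 / (2 * Real.pi)) * (a / Real.sqrt β + 1), 8 * β, by positivity, by positivity,
    fun y hy t ht => ?_⟩
  have ht0 : (0:ℝ) < t := lt_of_lt_of_le one_pos ht
  have h4βt : (0:ℝ) < 4 * β * t := by positivity
  set S := Real.sqrt (4 * β * t) with hSdef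
  have hS : 0 < S := Real.sqrt_pos.mpr h4βt
  have hS2 : S ^ 2 = 4 * β * t := Real.sq_sqrt h4βt.le
  set up := (y + a * t) / S with hup
  set um := (y - a * t) / S with hum
  set K := 1 / (2 * Real.pi) with hK
  have hKpos : 0 < K := by rw [hK]; positivity
  -- derivative computation
  have hplus : HasDerivAt (fun t' => errfn ((y + a * t') / Real.sqrt (4 * β * t')))
      ((K * Real.exp (-up^2)) * ((a * t - y) / (2 * t * S))) t :=
    by have := (errfn_hasDerivAt up).comp t (inner_hasDerivAt a y β hβ ht0); exact this
  have hminus : HasDerivAt (fun t' => errfn ((y - a * t') / Real.sqrt (4 * β * t')))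
      ((K * Real.exp (-um^2)) * ((-a * t - y) / (2 * t * S))) t := by
    have h : HasDerivAt (fun t' => errfn ((y + (-a) * t') / Real.sqrt (4 * β * t')))
        ((K * Real.exp (-((y + (-a) * t) / S)^2)) * (((-a) * t - y) / (2 * t * S))) t :=
      by have := (errfn_hasDerivAt ((y + (-a) * t) / S)).comp t (inner_hasDerivAt (-a) y β hβ ht0); exact this
    have hfun : (fun t' => errfn ((y + (-a) * t') / Real.sqrt (4 * β * t')))
        = (fun t' => errfn ((y - a * t') / Real.sqrt (4 * β * t'))) := by
      funext w; congr 1; ring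
    have harg : (y + (-a) * t) / S = um := by rw [hum]; ring_nf
    rw [hfun, harg] at h
    convert h using 2
  have hD : HasDerivAt (fun t' => eKernel a β y t')
      ((K * Real.exp (-up^2)) * ((a * t - y) / (2 * t * S))
        - (K * Real.exp (-um^2)) * ((-a * t - y) / (2 * t * S))) t := by
    have := hplus.sub hminus
    exact this.congr_of_eventuallyEq (Filter.Eventually.of_forall fun w => by
      simp only [eKernel]; rfl)
  rw [hD.deriv]
  -- notation
  set E := Real.exp (-up^2) with hE
  set Em := Real.exp (-um^2) with hEm
  have hEpos : 0 < E := Real.exp_pos _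
  have hEmpos : 0 < Em := Real.exp_pos _
  have hup2 : up^2 = (y + a * t)^2 / (4 * β * t) := by
    rw [hup, div_pow, hS2]
  have hum2 : um^2 = (y - a * t)^2 / (4 * β * t) := by
    rw [hum, div_pow, hS2]
  have hEmE : Em ≤ E := by
    rw [hE, hEm, Real.exp_le_exp, neg_le_neg_iff, hup2, hum2]
    have hnum : (y + a * t)^2 ≤ (y - a * t)^2 := by
      nlinarith [mul_nonneg (mul_nonneg (neg_nonneg.mpr hy) ha.le) ht0.le]
    exact div_le_div_of_nonneg_right hnum h4βt.le
  have hBpos : 0 ≤ (a * t - y) / (2 * t * S) := by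
    apply div_nonneg _ (by positivity)
    nlinarith
  have hBabs : |(-a * t - y) / (2 * t * S)| ≤ (a * t - y) / (2 * t * S) := by
    rw [abs_div, abs_of_pos (by positivity : (0:ℝ) < 2 * t * S)]
    apply div_le_div_of_nonneg_right _ (by positivity)
    rw [abs_le]
    constructor <;> nlinarith [mul_pos ha ht0]
  -- target exponential
  set G := Real.exp (-(y + a * t)^2 / (8 * β * t)) with hG
  have hEG : E ≤ G := by
    rw [hE, hG, Real.exp_le_exp, hup2, neg_div]
    have h8 : (y + a * t)^2 / (8 * β * t) ≤ (y + a * t)^2 / (4 * β * t) := by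
      gcongr <;> norm_num
    linarith
  have hrt : t ^ (-(1:ℝ)/2) = (Real.sqrt t)⁻¹ := by
    rw [show (-(1:ℝ)/2) = -(1/2) by norm_num, Real.rpow_neg ht0.le, Real.sqrt_eq_rpow]
  have hsqrt_t_pos : 0 < Real.sqrt t := Real.sqrt_pos.mpr ht0
  have hSeq : S = 2 * Real.sqrt β * Real.sqrt t := by
    rw [hSdef, show (4:ℝ) * β * t = (2 * Real.sqrt β)^2 * t by
        rw [mul_pow, Real.sq_sqrt hβ.le]; ring,
      Real.sqrt_mul (by positivity), Real.sqrt_sq (by positivity)]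
  -- step 1: triangle inequality
  have step1 : |(K * E) * ((a * t - y) / (2 * t * S)) - (K * Em) * ((-a * t - y) / (2 * t * S))|
      ≤ K * ((a * t - y) / (t * S)) * E := by
    calc |(K * E) * ((a * t - y) / (2 * t * S)) - (K * Em) * ((-a * t - y) / (2 * t * S))|
        ≤ |(K * E) * ((a * t - y) / (2 * t * S))| + |(K * Em) * ((-a * t - y) / (2 * t * S))| :=
          abs_sub _ _
      _ = (K * E) * ((a * t - y) / (2 * t * S)) + (K * Em) * |(-a * t - y) / (2 * t * S)| := by
          simp only [abs_mul]
          rw [abs_of_pos hKpos, abs_of_pos hEpos, abs_of_pos hEmpos, abs_of_nonneg hBpos]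
      _ ≤ (K * E) * ((a * t - y) / (2 * t * S)) + (K * E) * ((a * t - y) / (2 * t * S)) := by
          gcongr
      _ = K * ((a * t - y) / (t * S)) * E := by
          field_simp; ring
  -- step 2: split the numerator
  have hnum_split : a * t - y ≤ 2 * a * t + |y + a * t| := by
    have := neg_abs_le (y + a * t)
    linarith
  have step2 : K * ((a * t - y) / (t * S)) * E
      ≤ K * (2 * a / S) * E + K * (|y + a * t| / (t * S) * E) := by
    have h1 : (a * t - y) / (t * S) ≤ (2 * a * t + |y + a * t|) / (t * S) := by
      exact div_le_div_of_nonneg_right hnum_split (by positivity)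
    have h2 : (2 * a * t + |y + a * t|) / (t * S) = 2 * a / S + |y + a * t| / (t * S) := by
      field_simp
    calc K * ((a * t - y) / (t * S)) * E
        ≤ K * ((2 * a * t + |y + a * t|) / (t * S)) * E := by gcongr
      _ = K * (2 * a / S) * E + K * (|y + a * t| / (t * S) * E) := by rw [h2]; ring
  -- step 3: first term
  have step3 : K * (2 * a / S) * E ≤ K * (a / Real.sqrt β) * (t ^ (-(1:ℝ)/2)) * G := by
    have hcoef : 2 * a / S = a / Real.sqrt β * (t ^ (-(1:ℝ)/2)) := by
      rw [hrt, hSeq]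
      field_simp
    rw [hcoef]
    calc K * (a / Real.sqrt β * t ^ (-(1:ℝ)/2)) * E
        ≤ K * (a / Real.sqrt β * t ^ (-(1:ℝ)/2)) * G := by
          apply mul_le_mul_of_nonneg_left hEG
          have : (0:ℝ) ≤ t ^ (-(1:ℝ)/2) := by positivity
          positivity
      _ = K * (a / Real.sqrt β) * (t ^ (-(1:ℝ)/2)) * G := by ring
  -- step 4: second term
  have step4 : K * (|y + a * t| / (t * S) * E) ≤ K * (t ^ (-(1:ℝ)/2)) * G := by
    have hyat : |y + a * t| = |up| * S := by
      rw [hup, abs_div, abs_of_pos hS, div_mul_cancel₀ _ hS.ne']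
    have hkey : |y + a * t| / (t * S) * E = |up| * E / t := by
      rw [hyat]; field_simp
    have hG2 : Real.exp (-up^2/2) = G := by
      rw [hG, hup2]; congr 1; ring
    have h1 : |up| * E ≤ G := by
      rw [← hG2, hE]; exact abs_mul_exp_neg_sq_le up
    have h2 : (1:ℝ)/t ≤ t ^ (-(1:ℝ)/2) := by
      rw [hrt]
      rw [div_le_iff₀ ht0, inv_mul_eq_div, le_div_iff₀ hsqrt_t_pos]
      calc (1:ℝ) * Real.sqrt t = Real.sqrt t := one_mul _
        _ ≤ t := by nlinarith [sq_nonneg (Real.sqrt t - 1), Real.sq_sqrt ht0.le]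
    have hGpos : 0 < G := Real.exp_pos _
    calc K * (|y + a * t| / (t * S) * E) = K * (|up| * E / t) := by rw [hkey]
      _ ≤ K * (G / t) := by
          apply mul_le_mul_of_nonneg_left _ hKpos.le
          exact div_le_div_of_nonneg_right h1 ht0.le
      _ = K * (G * (1/t)) := by ring
      _ ≤ K * (G * t ^ (-(1:ℝ)/2)) := by
          apply mul_le_mul_of_nonneg_left _ hKpos.le
          exact mul_le_mul_of_nonneg_left h2 hGpos.le
      _ = K * (t ^ (-(1:ℝ)/2)) * G := by ring
  -- assemble
  calc |(K * E) * ((a * t - y) / (2 * t * S)) - (K * Em) * ((-a * t - y) / (2 * t * S))|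
      ≤ K * ((a * t - y) / (t * S)) * E := step1
    _ ≤ K * (2 * a / S) * E + K * (|y + a * t| / (t * S) * E) := step2
    _ ≤ K * (a / Real.sqrt β) * (t ^ (-(1:ℝ)/2)) * G + K * (t ^ (-(1:ℝ)/2)) * G :=
        add_le_add step3 step4
    _ = K * (a / Real.sqrt β + 1) * t ^ (-(1:ℝ)/2) * G := by ring
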